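/- Morse matchings on a 1-dimensional simplicial complex Δ (i.e., a graph G) are in bijection with orientations of subgraphs of G that are branchings: if M is a Morse matching, orienting each matched edge toward its matched vertex yields a subgraph in which every vertex has in-degree at most one and which contains no directed cycle; conversely every such branching arises from a unique Morse matching. -/
import Mathlib


open Finset

variable {V : Type*} [DecidableEq V]

/-- A finite abstract simplicial complex on vertex set `V`: a finite family of
nonempty finite subsets closed under taking nonempty subsets. -/
structure SC (V : Type*) [DecidableEq V] where
  faces : Finset (Finset V)
  nonempty_mem : ∀ F ∈ faces, F.Nonempty
  down_closed : ∀ F ∈ faces, ∀ G : Finset V, G.Nonempty → G ⊆ F → G ∈ faces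

/-- Arcs of the Hasse diagram: pairs `(G, F)` with `F ≺ G` (covering relation),
directed from the higher- to the lower-dimensional face. -/
def arcs (Δ : SC V) : Finset (Finset V × Finset V) :=
  (Δ.faces ×ˢ Δ.faces).filter fun p => p.2 ⊆ p.1 ∧ p.2.card + 1 = p.1.card

/-- The set `δ(F)` of arcs incident to the face `F`. -/
def inc (Δ : SC V) (F : Finset V) : Finset (Finset V × Finset V) :=
  (arcs Δ).filter fun a => a.1 = F ∨ a.2 = F

/-- `M` is a matching in the Hasse diagram: a set of arcs such that each face is
incident to at most one arc of `M`. -/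
def IsMatching (Δ : SC V) (M : Finset (Finset V × Finset V)) : Prop :=
  M ⊆ arcs Δ ∧ ∀ a ∈ M, ∀ b ∈ M, a ≠ b →
    a.1 ≠ b.1 ∧ a.1 ≠ b.2 ∧ a.2 ≠ b.1 ∧ a.2 ≠ b.2

/-- The arc relation of the modified Hasse diagram `H(M)`: arcs of `H` with the
arcs of `M` reversed. -/
def HMrel (Δ : SC V) (M : Finset (Finset V × Finset V)) (X Y : Finset V) : Prop :=
  ((X, Y) ∈ arcs Δ ∧ (X, Y) ∉ M) ∨ (Y, X) ∈ M

/-- A simple directed cycle of length `n` in the relation `r`,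
given as an injective cyclic sequence of vertices. -/
def IsDirCycle {α : Type*} (r : α → α → Prop) (n : ℕ) (c : ZMod n → α) : Prop :=
  2 ≤ n ∧ Function.Injective c ∧ ∀ i, r (c i) (c (i + 1))

/-- A Morse matching: a matching `M` such that `H(M)` is acyclic. -/
def IsMorse (Δ : SC V) (M : Finset (Finset V × Finset V)) : Prop :=
  IsMatching Δ M ∧ ∀ (n : ℕ) (c : ZMod n → Finset V), ¬ IsDirCycle (HMrel Δ M) n c

/-- A branching on (the graph of) `Δ`: an orientation `D` of a subgraph of the
graph of `Δ` in which every vertex has in-degree at most one and which contains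
no directed cycle. -/
def IsBranching (Δ : SC V) (D : V → V → Prop) : Prop :=
  (∀ u v, D u v → u ≠ v ∧ ({u, v} : Finset V) ∈ Δ.faces) ∧
  (∀ v u u', D u v → D u' v → u = u') ∧
  (∀ (n : ℕ) (c : ZMod n → V), ¬ IsDirCycle D n c)

section AuxMorse

lemma mem_arcs_iff (Δ : SC V) {a : Finset V × Finset V} :
    a ∈ arcs Δ ↔ a.1 ∈ Δ.faces ∧ a.2 ∈ Δ.faces ∧ a.2 ⊆ a.1 ∧ a.2.card + 1 = a.1.card := by
  simp [arcs, Finset.mem_filter, Finset.mem_product, and_assoc]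

lemma arc_shape (Δ : SC V) (hdim : ∀ F ∈ Δ.faces, F.card ≤ 2) {a : Finset V × Finset V}
    (ha : a ∈ arcs Δ) : ∃ u v, u ≠ v ∧ a.1 = {u, v} ∧ a.2 = {v} := by
  rw [mem_arcs_iff] at ha
  obtain ⟨h1, h2, hsub, hcard⟩ := ha
  have h2ne := Δ.nonempty_mem _ h2
  have hc2 : a.2.card = 1 := by
    have := hdim _ h1
    have := Finset.card_pos.mpr h2ne
    omega
  obtain ⟨v, hv⟩ := Finset.card_eq_one.mp hc2
  have hc1 : a.1.card = 2 := by omega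
  obtain ⟨x, y, hxy, hxyeq⟩ := Finset.card_eq_two.mp hc1
  have hvmem : v ∈ a.1 := hsub (by simp [hv])
  rw [hxyeq] at hvmem
  simp only [Finset.mem_insert, Finset.mem_singleton] at hvmem
  rcases hvmem with rfl | rfl
  · exact ⟨y, v, fun h => hxy h.symm, by rw [hxyeq]; exact Finset.pair_comm _ _, hv⟩
  · exact ⟨x, v, hxy, hxyeq, hv⟩

lemma zmod_cast_inj {n : ℕ} {a b : ℕ} (ha : a < n) (hb : b < n)
    (h : (a : ZMod n) = b) : a = b := by
  haveI : NeZero n := ⟨by omega⟩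
  have := congrArg ZMod.val h
  rwa [ZMod.val_cast_of_lt ha, ZMod.val_cast_of_lt hb] at this

/-- auxiliary sequence for the forward direction -/
def Fseq {V : Type*} [DecidableEq V] (n : ℕ) (c : ZMod n → V) (k : ℕ) : Finset V :=
  if Even k then {c (-((k / 2 : ℕ) : ZMod n))}
  else {c (-((k / 2 : ℕ) : ZMod n) - 1), c (-((k / 2 : ℕ) : ZMod n))}

lemma Fseq_add {n : ℕ} (c : ZMod n → V) (k : ℕ) :
    Fseq n c (k + 2 * n) = Fseq n c k := by
  unfold Fseq
  have h1 : (k + 2 * n) / 2 = k / 2 + n := by omega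
  have h2 : ((k / 2 + n : ℕ) : ZMod n) = ((k / 2 : ℕ) : ZMod n) := by
    push_cast
    simp
  have h3 : Even (k + 2 * n) ↔ Even k := by simp [Nat.even_add]
  rw [h1, h2, if_congr h3 rfl rfl]

lemma Fseq_mod {n : ℕ} (c : ZMod n → V) (k : ℕ) :
    Fseq n c (k % (2 * n)) = Fseq n c k := by
  have haux : ∀ q r : ℕ, Fseq n c (r + 2 * n * q) = Fseq n c r := by
    intro q
    induction q with
    | zero => intro r; simp
    | succ q ih =>
      intro r
      have h : r + 2 * n * (q + 1) = (r + 2 * n * q) + 2 * n := by ring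
      rw [h, Fseq_add, ih]
  conv_rhs => rw [← Nat.mod_add_div k (2 * n)]
  exact (haux (k / (2 * n)) (k % (2 * n))).symm

lemma morse_branching (Δ : SC V) (hdim : ∀ F ∈ Δ.faces, F.card ≤ 2)
    {M : Finset (Finset V × Finset V)} (hM : IsMorse Δ M) :
    IsBranching Δ (fun u v => (({u, v}, {v}) : Finset V × Finset V) ∈ M) := by
  obtain ⟨⟨hsub, hmat⟩, hacyc⟩ := hM
  have h1 : ∀ u v : V, (({u, v}, {v}) : Finset V × Finset V) ∈ M →
      u ≠ v ∧ ({u, v} : Finset V) ∈ Δ.faces ∧ ({v} : Finset V) ∈ Δ.faces := by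
    intro u v h
    have ha := hsub h
    rw [mem_arcs_iff] at ha
    obtain ⟨hf1, hf2, _, hcard⟩ := ha
    refine ⟨?_, hf1, hf2⟩
    rintro rfl
    simp at hcard
  have h2 : ∀ (v u u' : V), (({u, v}, {v}) : Finset V × Finset V) ∈ M →
      (({u', v}, {v}) : Finset V × Finset V) ∈ M → u = u' := by
    intro v u u' h h'
    by_contra hne
    have hd : (({u, v}, {v}) : Finset V × Finset V) ≠ ({u', v}, {v}) := by
      intro he
      simp only [Prod.mk.injEq] at he
      have h5 : u ∈ ({u', v} : Finset V) := by
        rw [← he.1]; simp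
      simp only [Finset.mem_insert, Finset.mem_singleton] at h5
      rcases h5 with h5 | h5
      · exact hne h5
      · exact (h1 u v h).1 h5
    exact (hmat _ h _ h' hd).2.2.2 rfl
  refine ⟨fun u v h => ⟨(h1 u v h).1, (h1 u v h).2.1⟩, h2, ?_⟩
  rintro n c ⟨hn, hinj, hcyc⟩
  by_cases hn2 : n = 2
  · subst hn2
    have d0 := hcyc 0
    have d1 := hcyc 1
    have e10 : (1 + 1 : ZMod 2) = 0 := by decide
    rw [e10] at d1
    have hne : c 0 ≠ c 1 := fun h => absurd (hinj h) (by decide)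
    have hd : (({c 0, c 1}, {c 1}) : Finset V × Finset V) ≠ ({c 1, c 0}, {c 0}) := by
      intro he
      exact hne (Finset.singleton_injective (Prod.ext_iff.mp he).2).symm
    exact (hmat _ d0 _ d1 hd).1 (Finset.pair_comm (c 0) (c 1))
  · have hn3 : 3 ≤ n := by omega
    haveI : NeZero n := ⟨by omega⟩
    have hne1 : ∀ a : ZMod n, a ≠ a + 1 := by
      intro a h
      have h0 : ((1 : ℕ) : ZMod n) = 0 := by
        exact_mod_cast (left_eq_add.mp h)
      have := (ZMod.natCast_eq_zero_iff 1 n).mp h0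
      have := Nat.le_of_dvd one_pos this
      omega
    have hcne : ∀ a : ZMod n, c a ≠ c (a + 1) := fun a h => hne1 a (hinj h)
    have hMa : ∀ a : ZMod n, (({c a, c (a + 1)}, {c (a + 1)}) : Finset V × Finset V) ∈ M :=
      fun a => hcyc a
    have hMnot : ∀ a : ZMod n, (({c a, c (a + 1)}, {c a}) : Finset V × Finset V) ∉ M := by
      intro a hmem
      have hd : (({c a, c (a + 1)}, {c a}) : Finset V × Finset V)
          ≠ ({c a, c (a + 1)}, {c (a + 1)}) := by
        intro he
        exact hcne a (Finset.singleton_injective (Prod.ext_iff.mp he).2)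
      exact (hmat _ hmem _ (hMa a) hd).1 rfl
    have harc : ∀ a : ZMod n, (({c a, c (a + 1)}, {c a}) : Finset V × Finset V) ∈ arcs Δ := by
      intro a
      have hf := (h1 _ _ (hMa a)).2.1
      rw [mem_arcs_iff]
      refine ⟨hf, Δ.down_closed _ hf _ (Finset.singleton_nonempty _) (by simp), by simp, ?_⟩
      simp [Finset.card_pair (hcne a)]
    have step : ∀ k : ℕ, HMrel Δ M (Fseq n c k) (Fseq n c (k + 1)) := by
      intro k
      rcases Nat.even_or_odd k with he | ho
      · have hek : Even k := he
        have hok : ¬ Even (k + 1) := by simp [Nat.even_add_one, hek]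
        obtain ⟨j, hj⟩ := he
        have hk12 : (k + 1) / 2 = k / 2 := by omega
        unfold Fseq
        rw [if_pos hek, if_neg hok, hk12]
        right
        have := hMa (-((k / 2 : ℕ) : ZMod n) - 1)
        simpa using this
      · have hok : ¬ Even k := by simp [Nat.not_even_iff_odd.mpr ho]
        have hek1 : Even (k + 1) := by simpa [Nat.even_add_one] using hok
        have hk12 : (k + 1) / 2 = k / 2 + 1 := by
          obtain ⟨j, hj⟩ := ho; omega
        unfold Fseq
        rw [if_neg hok, if_pos hek1, hk12]
        have hcast : (-(((k / 2 + 1 : ℕ)) : ZMod n)) = -((k / 2 : ℕ) : ZMod n) - 1 := by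
          push_cast; ring
        rw [hcast]
        left
        constructor
        · have := harc (-((k / 2 : ℕ) : ZMod n) - 1)
          simpa using this
        · have := hMnot (-((k / 2 : ℕ) : ZMod n) - 1)
          simpa using this
    have cardF : ∀ k : ℕ, (Fseq n c k).card = if Even k then 1 else 2 := by
      intro k
      have hd : c (-((k / 2 : ℕ) : ZMod n) - 1) ≠ c (-((k / 2 : ℕ) : ZMod n)) := by
        have := hcne (-((k / 2 : ℕ) : ZMod n) - 1)
        simpa using this
      unfold Fseq
      split
      · simp
      · simp [Finset.card_pair hd]
    have Finj : ∀ k k' : ℕ, k < 2 * n → k' < 2 * n → Fseq n c k = Fseq n c k' → k = k' := by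
      intro k k' hk hk' hFe
      have hcards := congrArg Finset.card hFe
      rw [cardF, cardF] at hcards
      have hsame : Even k ↔ Even k' := by
        by_cases h : Even k <;> by_cases h' : Even k' <;> simp [h, h'] at hcards ⊢
      have hdiv : k / 2 = k' / 2 → k = k' := by
        intro h
        rcases Nat.even_or_odd k with he | ho
        · obtain ⟨j', hj'⟩ := hsame.mp he
          obtain ⟨j, hj⟩ := he
          omega
        · have ho' : Odd k' := by
            rcases Nat.even_or_odd k' with he' | ho'
            · exact absurd (hsame.mpr he') (by simp [Nat.not_even_iff_odd.mpr ho])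
            · exact ho'
          obtain ⟨j, hj⟩ := ho
          obtain ⟨j', hj'⟩ := ho'
          omega
      have hcastinj : (((k / 2 : ℕ)) : ZMod n) = ((k' / 2 : ℕ) : ZMod n) → k = k' := by
        intro h
        exact hdiv (zmod_cast_inj (by omega) (by omega) h)
      by_cases he : Even k
      · have he' := hsame.mp he
        unfold Fseq at hFe
        rw [if_pos he, if_pos he'] at hFe
        apply hcastinj
        have := hinj (Finset.singleton_injective hFe)
        exact neg_injective this
      · have he' : ¬ Even k' := fun h => he (hsame.mpr h)
        unfold Fseq at hFe
        rw [if_neg he, if_neg he'] at hFe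
        set a := -((k / 2 : ℕ) : ZMod n) with hadef
        set b := -((k' / 2 : ℕ) : ZMod n) with hbdef
        have hmem : c a ∈ ({c (b - 1), c b} : Finset V) := by
          rw [← hFe]; simp
        simp only [Finset.mem_insert, Finset.mem_singleton] at hmem
        rcases hmem with hab | hab
        · -- c a = c (b-1)
          have hab' : a = b - 1 := hinj hab
          have hmem2 : c b ∈ ({c (a - 1), c a} : Finset V) := by
            rw [hFe]; simp
          simp only [Finset.mem_insert, Finset.mem_singleton] at hmem2
          rcases hmem2 with hba | hba
          · have hba' : b = a - 1 := hinj hba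
            exfalso
            have h20 : ((2 : ℕ) : ZMod n) = 0 := by
              have h2 : (2 : ZMod n) = 0 := by linear_combination hab' + hba'
              exact_mod_cast h2
            have := (ZMod.natCast_eq_zero_iff 2 n).mp h20
            have := Nat.le_of_dvd two_pos this
            omega
          · have hba' : b = a := hinj hba
            apply hcastinj
            have : a = b := hba'.symm
            rw [hadef, hbdef] at this
            exact neg_injective this
        · apply hcastinj
          have : a = b := hinj hab
          rw [hadef, hbdef] at this
          exact neg_injective this
    haveI : NeZero (2 * n) := ⟨by omega⟩
    haveI : Fact (1 < 2 * n) := ⟨by omega⟩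
    apply hacyc (2 * n) (fun i : ZMod (2 * n) => Fseq n c i.val)
    refine ⟨by omega, ?_, ?_⟩
    · intro i i' h
      have := Finj i.val i'.val (ZMod.val_lt i) (ZMod.val_lt i') h
      exact ZMod.val_injective (2 * n) this
    · intro i
      show HMrel Δ M (Fseq n c i.val) (Fseq n c (i + 1).val)
      have hval : (i + 1).val = (i.val + 1) % (2 * n) := by
        rw [ZMod.val_add, ZMod.val_one]
      rw [hval, Fseq_mod]
      exact step i.val

open Classical in
/-- The matching associated with an orientation `D`. -/
noncomputable def toM (Δ : SC V) (D : V → V → Prop) : Finset (Finset V × Finset V) :=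
  (arcs Δ).filter fun a => ∃ u v, D u v ∧ a = ({u, v}, {v})

lemma mem_toM {Δ : SC V} {D : V → V → Prop} {a : Finset V × Finset V} :
    a ∈ toM Δ D ↔ a ∈ arcs Δ ∧ ∃ u v, D u v ∧ a = ({u, v}, {v}) := by
  classical
  rw [toM, Finset.mem_filter]

lemma mem_toM' (Δ : SC V) {D : V → V → Prop} (hD : IsBranching Δ D) {u v : V}
    (h : D u v) : (({u, v}, {v}) : Finset V × Finset V) ∈ toM Δ D := by
  obtain ⟨hne, hf⟩ := hD.1 u v h
  rw [mem_toM]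
  refine ⟨?_, u, v, h, rfl⟩
  rw [mem_arcs_iff]
  refine ⟨hf, Δ.down_closed _ hf _ (Finset.singleton_nonempty v) (by simp), by simp, ?_⟩
  simp [Finset.card_pair hne]

lemma branching_morse (Δ : SC V) (hdim : ∀ F ∈ Δ.faces, F.card ≤ 2)
    {D : V → V → Prop} (hD : IsBranching Δ D) : IsMorse Δ (toM Δ D) := by
  obtain ⟨hD1, hD2, hD3⟩ := hD
  have shape_toM : ∀ {a : Finset V × Finset V}, a ∈ toM Δ D →
      ∃ u v, D u v ∧ a = ({u, v}, {v}) := fun h => (mem_toM.mp h).2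
  have no2cycle : ∀ u v, D u v → D v u → False := by
    intro u v huv hvu
    have hne := (hD1 u v huv).1
    set c : ZMod 2 → V := fun i => if i = 0 then u else v with hc
    have hc0 : c 0 = u := if_pos rfl
    have hc1 : c 1 = v := if_neg (by decide)
    have h01 : ∀ i : ZMod 2, i = 0 ∨ i = 1 := by decide
    apply hD3 2 c
    refine ⟨le_refl 2, ?_, ?_⟩
    · intro i i' h
      rcases h01 i with rfl | rfl <;> rcases h01 i' with rfl | rfl
      · rfl
      · rw [hc0, hc1] at h; exact absurd h hne
      · rw [hc0, hc1] at h; exact absurd h.symm hne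
      · rfl
    · intro i
      rcases h01 i with rfl | rfl
      · show D (c 0) (c (0 + 1))
        norm_num [hc0, hc1]
        exact huv
      · show D (c 1) (c (1 + 1))
        have : (1 + 1 : ZMod 2) = 0 := by decide
        rw [this, hc0, hc1]
        exact hvu
  constructor
  · refine ⟨fun a ha => (mem_toM.mp ha).1, ?_⟩
    intro a ha b hb hab
    obtain ⟨u, v, huv, rfl⟩ := shape_toM ha
    obtain ⟨u', v', hu'v', rfl⟩ := shape_toM hb
    have hne := (hD1 _ _ huv).1
    have hne' := (hD1 _ _ hu'v').1
    have hvv' : v ≠ v' := by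
      rintro rfl
      exact hab (by rw [hD2 v u u' huv hu'v'])
    refine ⟨?_, ?_, ?_, ?_⟩
    · intro hp
      simp only at hp
      have hv : v ∈ ({u', v'} : Finset V) := by rw [← hp]; simp
      have hv' : v' ∈ ({u, v} : Finset V) := by rw [hp]; simp
      simp only [Finset.mem_insert, Finset.mem_singleton] at hv hv'
      have hvu' : v = u' := by
        rcases hv with h | h
        · exact h
        · exact absurd h hvv'
      have hv'u : v' = u := by
        rcases hv' with h | h
        · exact h
        · exact absurd h (Ne.symm hvv')
      have d1 : D v' v := by rw [hv'u]; exact huv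
      have d2 : D v v' := by rw [hvu']; exact hu'v'
      exact no2cycle v' v d1 d2
    · intro hp
      simp only at hp
      have := congrArg Finset.card hp
      rw [Finset.card_pair hne] at this
      simp at this
    · intro hp
      simp only at hp
      have := congrArg Finset.card hp
      rw [Finset.card_pair hne'] at this
      simp at this
    · intro hp
      simp only at hp
      exact hvv' (Finset.singleton_injective hp)
  · rintro n c ⟨hn, hinj, hcyc⟩
    haveI : NeZero n := ⟨by omega⟩
    have step : ∀ X Y : Finset V, HMrel Δ (toM Δ D) X Y →
        (X.card = 1 ∧ Y.card = 2 ∧ ∃ u v, D u v ∧ X = {v} ∧ Y = {u, v}) ∨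
        (X.card = 2 ∧ Y.card = 1 ∧ ((X, Y) : Finset V × Finset V) ∈ arcs Δ ∧
          ((X, Y) : Finset V × Finset V) ∉ toM Δ D) := by
      intro X Y h
      rcases h with ⟨harc, hnot⟩ | hmem
      · right
        obtain ⟨u, v, hne, h1, h2⟩ := arc_shape Δ hdim harc
        simp only at h1 h2
        refine ⟨by rw [h1]; exact Finset.card_pair hne, by rw [h2]; simp, harc, hnot⟩
      · left
        obtain ⟨u, v, huv, heq⟩ := shape_toM hmem
        simp only [Prod.mk.injEq] at heq
        exact ⟨by rw [heq.2]; simp, by rw [heq.1]; exact Finset.card_pair (hD1 _ _ huv).1,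
          u, v, huv, heq.2, heq.1⟩
    obtain ⟨i₀, hi₀⟩ : ∃ i₀ : ZMod n, (c i₀).card = 1 := by
      rcases step _ _ (hcyc 0) with ⟨h, _⟩ | ⟨_, h, _⟩
      · exact ⟨0, h⟩
      · exact ⟨1, by rwa [zero_add] at h⟩
    set c₂ : ZMod n → Finset V := fun i => c (i + i₀) with hc₂
    have hinj₂ : Function.Injective c₂ := fun i j h => by
      have := hinj h
      exact add_right_cancel this
    have hcyc₂ : ∀ i, HMrel Δ (toM Δ D) (c₂ i) (c₂ (i + 1)) := by
      intro i
      have := hcyc (i + i₀)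
      show HMrel Δ (toM Δ D) (c (i + i₀)) (c (i + 1 + i₀))
      rwa [add_right_comm]
    have h0 : (c₂ 0).card = 1 := by
      show (c (0 + i₀)).card = 1
      rwa [zero_add]
    have parity : ∀ k : ℕ, (c₂ (k : ZMod n)).card = if Even k then 1 else 2 := by
      intro k
      induction k with
      | zero => simpa using h0
      | succ k ih =>
        have hcast : ((k + 1 : ℕ) : ZMod n) = (k : ZMod n) + 1 := by push_cast; ring
        rw [hcast]
        rcases step _ _ (hcyc₂ (k : ZMod n)) with ⟨hk1, hk2, _⟩ | ⟨hk1, hk2, _⟩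
        · have hek : Even k := by
            by_contra h
            rw [if_neg h] at ih
            omega
          rw [if_neg (by simp [Nat.even_add_one, hek])]
          exact hk2
        · have hok : ¬ Even k := by
            intro h
            rw [if_pos h] at ih
            omega
          rw [if_pos (by simpa [Nat.even_add_one] using hok)]
          exact hk2
    have heven : Even n := by
      have h := parity n
      rw [ZMod.natCast_self] at h
      rw [h0] at h
      by_contra ho
      rw [if_neg ho] at h
      omega
    obtain ⟨m, hm⟩ := heven
    have hm1 : 1 ≤ m := by omega
    have hsing : ∀ k : ℕ, ∃ a, c₂ ((2 * k : ℕ) : ZMod n) = {a} := by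
      intro k
      apply Finset.card_eq_one.mp
      rw [parity (2 * k), if_pos (even_two_mul k)]
    set f : ℕ → V := fun k => (hsing k).choose with hfdef
    have hf : ∀ k : ℕ, c₂ ((2 * k : ℕ) : ZMod n) = {f k} := fun k => (hsing k).choose_spec
    have key : ∀ k : ℕ, D (f (k + 1)) (f k) := by
      intro k
      rcases step _ _ (hcyc₂ ((2 * k : ℕ) : ZMod n)) with
        ⟨_, _, u, v, huv, hX, hY⟩ | ⟨h2c, _⟩
      swap
      · rw [hf k] at h2c
        simp at h2c
      · have hv : v = f k := by
          have := (hf k).symm.trans hX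
          exact (Finset.singleton_injective this).symm
        subst hv
        rcases step _ _ (hcyc₂ (((2 * k : ℕ) : ZMod n) + 1)) with ⟨h1c, _⟩ |
          ⟨_, _, harc2, hnot2⟩
        · rw [hY] at h1c
          rw [Finset.card_pair (hD1 _ _ huv).1] at h1c
          omega
        · have hcast : (((2 * k : ℕ) : ZMod n) + 1) + 1 = ((2 * (k + 1) : ℕ) : ZMod n) := by
            push_cast; ring
          rw [hcast, hf (k + 1), hY] at harc2 hnot2
          have hmm : f (k + 1) ∈ ({u, f k} : Finset V) := by
            have hs := ((mem_arcs_iff Δ).mp harc2).2.2.1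
            simpa using hs
          rcases Finset.mem_insert.mp hmm with h | h
          · rw [h]
            exact huv
          · rw [Finset.mem_singleton] at h
            exfalso
            apply hnot2
            rw [h]
            exact mem_toM' Δ ⟨hD1, hD2, hD3⟩ huv
    have fperiod : ∀ k : ℕ, f (k + m) = f k := by
      intro k
      have hcast : ((2 * (k + m) : ℕ) : ZMod n) = ((2 * k : ℕ) : ZMod n) := by
        have h2m : ((2 * m : ℕ) : ZMod n) = 0 := by
          rw [show 2 * m = n by omega]
          exact ZMod.natCast_self n
        calc ((2 * (k + m) : ℕ) : ZMod n) = ((2 * k : ℕ) : ZMod n) + ((2 * m : ℕ) : ZMod n) := by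
              push_cast; ring
          _ = ((2 * k : ℕ) : ZMod n) := by rw [h2m, add_zero]
      have h1 := hf (k + m)
      rw [hcast, hf k] at h1
      exact (Finset.singleton_injective h1).symm
    have fmod : ∀ k : ℕ, f k = f (k % m) := by
      intro k
      have haux : ∀ q r : ℕ, f (r + m * q) = f r := by
        intro q
        induction q with
        | zero => intro r; simp
        | succ q ih =>
          intro r
          have h : r + m * (q + 1) = (r + m * q) + m := by ring
          rw [h, fperiod, ih]
      conv_lhs => rw [← Nat.mod_add_div k m]
      exact haux (k / m) (k % m)
    have finj : ∀ a b : ℕ, a < m → b < m → f a = f b → a = b := by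
      intro a b ha hb h
      have h1 : c₂ ((2 * a : ℕ) : ZMod n) = c₂ ((2 * b : ℕ) : ZMod n) := by
        rw [hf, hf, h]
      have h2 := hinj₂ h1
      have h3 := congrArg ZMod.val h2
      rw [ZMod.val_cast_of_lt (by omega), ZMod.val_cast_of_lt (by omega)] at h3
      omega
    rcases Nat.lt_or_ge m 2 with hm2 | hm2
    · have hmeq : m = 1 := by omega
      have h1 := fperiod 0
      rw [hmeq] at h1
      exact (hD1 _ _ (key 0)).1 (by simpa using h1)
    · haveI : NeZero m := ⟨by omega⟩
      haveI : Fact (1 < m) := ⟨hm2⟩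
      apply hD3 m (fun i : ZMod m => f ((-i).val))
      refine ⟨hm2, ?_, ?_⟩
      · intro i i' h
        have h1 := finj _ _ (ZMod.val_lt _) (ZMod.val_lt _) h
        have h2 : (-i : ZMod m) = -i' := ZMod.val_injective m h1
        exact neg_injective h2
      · intro i
        show D (f ((-i).val)) (f ((-(i + 1)).val))
        have hb := key ((-(i + 1)).val)
        have hcoe : f ((-(i + 1)).val + 1) = f ((-i).val) := by
          have h1 : (-i : ZMod m) = (-(i + 1)) + 1 := by ring
          have h2 : ((-(i + 1)) + 1 : ZMod m).val = ((-(i + 1)).val + 1) % m := by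
            rw [ZMod.val_add, ZMod.val_one]
          calc f ((-(i + 1)).val + 1) = f (((-(i + 1)).val + 1) % m) := fmod _
            _ = f (((-(i + 1)) + 1 : ZMod m).val) := by rw [← h2]
            _ = f ((-i).val) := by rw [← h1]
        rw [← hcoe]
        exact hb

lemma toM_eq (Δ : SC V) (hdim : ∀ F ∈ Δ.faces, F.card ≤ 2)
    {M : Finset (Finset V × Finset V)} (hM : IsMorse Δ M) :
    toM Δ (fun u v => (({u, v}, {v}) : Finset V × Finset V) ∈ M) = M := by
  ext a
  rw [mem_toM]
  constructor
  · rintro ⟨-, u, v, hm, rfl⟩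
    exact hm
  · intro ha
    refine ⟨hM.1.1 ha, ?_⟩
    obtain ⟨u, v, hne, h1, h2⟩ := arc_shape Δ hdim (hM.1.1 ha)
    have haeq : a = ({u, v}, {v}) := Prod.ext h1 h2
    exact ⟨u, v, haeq ▸ ha, haeq⟩

lemma toD_eq (Δ : SC V) {D : V → V → Prop} (hD : IsBranching Δ D) :
    (fun u v => (({u, v}, {v}) : Finset V × Finset V) ∈ toM Δ D) = D := by
  funext u v
  apply propext
  constructor
  · intro h
    obtain ⟨-, u', v', huv, heq⟩ := mem_toM.mp h
    simp only [Prod.mk.injEq] at heq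
    have h2 : v = v' := Finset.singleton_injective heq.2
    subst h2
    have hu'ne : u' ≠ v := (hD.1 _ _ huv).1
    by_cases huv0 : u = v
    · exfalso
      have := congrArg Finset.card heq.1
      rw [huv0, Finset.card_pair hu'ne] at this
      simp at this
    · have hmem : u ∈ ({u', v} : Finset V) := by rw [← heq.1]; simp
      rcases Finset.mem_insert.mp hmem with h | h
      · rw [h]; exact huv
      · rw [Finset.mem_singleton] at h
        exact absurd h huv0
  · intro h
    exact mem_toM' Δ hD h

end AuxMorse

/-- For a one-dimensional simplicial complex (a graph), the
Morse matchings are in one-to-one correspondence with branchings: the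
bijection sends a Morse matching `M` to the orientation in which every matched
edge points towards its matched vertex. -/
theorem morse_matchings_equiv_branchings (Δ : SC V)
    (hdim : ∀ F ∈ Δ.faces, F.card ≤ 2) :
    ∃ e : {M : Finset (Finset V × Finset V) // IsMorse Δ M} ≃
        {D : V → V → Prop // IsBranching Δ D},
      ∀ M, (e M).val = fun u v => (({u, v} : Finset V), ({v} : Finset V)) ∈ M.val := by
  refine ⟨⟨fun M => ⟨fun u v => (({u, v}, {v}) : Finset V × Finset V) ∈ M.val,
      morse_branching Δ hdim M.2⟩,
    fun D => ⟨toM Δ D.val, branching_morse Δ hdim D.2⟩,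
    fun M => Subtype.ext (toM_eq Δ hdim M.2),
    fun D => Subtype.ext (toD_eq Δ D.2)⟩, fun M => rfl⟩
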